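/- arXiv:1305.0433 — 2 statements merged into one kernel-verified Lean document; each statement's English description precedes it below -/
import Mathlib

section
/- Let G=(V,E) be a graph and C⊆V a set such that S=V∖C is a clique in G. Then pw(G) = min_{L⊆C} max{ pw(G[N[L]]; N(L)), pw(G[N[R]]; N(R)), |S∪N(L)|−1 }, where for each L⊆C we set R = C∖N[L], G[W] denotes the subgraph of G induced by W, and the neighborhoods N(·), N[·] are taken in G. -/
set_option linter.unusedSectionVars false
set_option linter.unusedVariables false
set_option maxHeartbeats 1000000


/-- A (finite, unrooted) tree decomposition of a graph `G` with node set `ι`. -/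
structure TreeDecomp (V ι : Type) (G : SimpleGraph V) where
  tree : SimpleGraph ι
  tree_isTree : tree.IsTree
  bag : ι → Finset V
  bag_cover : ∀ v, ∃ i, v ∈ bag i
  bag_edge : ∀ u v, G.Adj u v → ∃ i, u ∈ bag i ∧ v ∈ bag i
  bag_conn : ∀ v : V, (SimpleGraph.induce {i | v ∈ bag i} tree).Connected

/-- The width of a tree decomposition: maximum bag size minus one. -/
def TreeDecomp.width {V ι : Type} [Fintype ι] {G : SimpleGraph V}
    (d : TreeDecomp V ι G) : ℕ :=
  (Finset.univ.sup fun i => (d.bag i).card) - 1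

/-- The treewidth of `G`: minimum width over all tree decompositions of `G`. -/
noncomputable def treewidth {V : Type} (G : SimpleGraph V) : ℕ :=
  sInf {w | ∃ (ι : Type) (inst : Fintype ι) (d : TreeDecomp V ι G),
    @TreeDecomp.width V ι inst G d ≤ w}

/-- A path decomposition of `G` with bags indexed by `Fin n`. -/
structure PathDecomp {V : Type} (G : SimpleGraph V) (n : ℕ) where
  bag : Fin n → Finset V
  bag_cover : ∀ v, ∃ i, v ∈ bag i
  bag_edge : ∀ u v, G.Adj u v → ∃ i, u ∈ bag i ∧ v ∈ bag i
  bag_conv : ∀ i j k : Fin n, i ≤ j → j ≤ k → ∀ v, v ∈ bag i → v ∈ bag k → v ∈ bag j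

/-- The width of a path decomposition: maximum bag size minus one. -/
def PathDecomp.width {V : Type} {G : SimpleGraph V} {n : ℕ} (d : PathDecomp G n) : ℕ :=
  (Finset.univ.sup fun i => (d.bag i).card) - 1

/-- The pathwidth of `G`: minimum width over all path decompositions of `G`. -/
noncomputable def pathwidth {V : Type} (G : SimpleGraph V) : ℕ :=
  sInf {w | ∃ (n : ℕ) (d : PathDecomp G n), d.width ≤ w}

/-- `pw(G; W)`: minimum width over all path decompositions of `G` having `W` as an end bag. -/
noncomputable def pathwidthEnd {V : Type} (G : SimpleGraph V) (W : Set V) : ℕ :=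
  sInf {w | ∃ (n : ℕ) (d : PathDecomp G (n + 1)),
    (↑(d.bag (Fin.last n)) : Set V) = W ∧ d.width ≤ w}

/-- The (open) neighbourhood `N(W)` of a set of vertices. -/
def nbhd {V : Type} (G : SimpleGraph V) (W : Set V) : Set V :=
  {u | u ∉ W ∧ ∃ v ∈ W, G.Adj v u}

/-- The closed neighbourhood `N[W]` of a set of vertices. -/
def closedNbhd {V : Type} (G : SimpleGraph V) (W : Set V) : Set V :=
  nbhd G W ∪ W

open Classical

namespace PW

variable {V : Type} [Fintype V] {G : SimpleGraph V}

lemma mem_image_val {V' : Type} [DecidableEq V'] {A : Set V'} (s : Finset ↥A) (v : V') :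
    v ∈ s.image Subtype.val ↔ ∃ h : v ∈ A, ⟨v, h⟩ ∈ s := by
  simp [Finset.mem_image]

lemma card_image_val {V' : Type} [DecidableEq V'] {A : Set V'} (s : Finset ↥A) :
    (s.image Subtype.val).card = s.card :=
  Finset.card_image_of_injective _ Subtype.val_injective

/-- Pad a path decomposition with an extra empty last bag. -/
noncomputable def pad {n : ℕ} (d : PathDecomp G n) : PathDecomp G (n + 1) where
  bag i := if h : (i : ℕ) < n then d.bag ⟨i, h⟩ else ∅
  bag_cover v := by
    obtain ⟨i, hi⟩ := d.bag_cover v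
    exact ⟨⟨i, by omega⟩, by simpa [i.isLt] using hi⟩
  bag_edge u v huv := by
    obtain ⟨i, hu, hv⟩ := d.bag_edge u v huv
    exact ⟨⟨i, by omega⟩, by simpa [i.isLt] using hu, by simpa [i.isLt] using hv⟩
  bag_conv i j k hij hjk v hvi hvk := by
    by_cases hk : (k : ℕ) < n
    · have hj : (j : ℕ) < n := lt_of_le_of_lt hjk hk
      have hi : (i : ℕ) < n := lt_of_le_of_lt hij hj
      simp only [dif_pos hi] at hvi
      simp only [dif_pos hk] at hvk
      simp only [dif_pos hj]
      exact d.bag_conv ⟨i, hi⟩ ⟨j, hj⟩ ⟨k, hk⟩ hij hjk v hvi hvk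
    · simp only [dif_neg hk] at hvk
      exact absurd hvk (Finset.notMem_empty v)

lemma pad_width {n : ℕ} (d : PathDecomp G n) : (pad d).width ≤ d.width := by
  apply Nat.sub_le_sub_right
  apply Finset.sup_le
  intro i _
  by_cases h : (i : ℕ) < n
  · simp only [pad, dif_pos h]
    exact Finset.le_sup (f := fun i : Fin n => (d.bag i).card) (Finset.mem_univ (⟨(i : ℕ), h⟩ : Fin n))
  · simp [pad, dif_neg h]

/-- The trivial one-bag path decomposition. -/
noncomputable def trivPD (G : SimpleGraph V) : PathDecomp G 1 where
  bag _ := Finset.univ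
  bag_cover v := ⟨0, Finset.mem_univ v⟩
  bag_edge u v _ := ⟨0, Finset.mem_univ u, Finset.mem_univ v⟩
  bag_conv i j k _ _ v _ _ := Finset.mem_univ v

/-- The trivial two-bag path decomposition ending at `W`. -/
noncomputable def endPD (G : SimpleGraph V) (W : Set V) : PathDecomp G 2 where
  bag i := if (i : ℕ) = 0 then Finset.univ else Finset.univ.filter (· ∈ W)
  bag_cover v := ⟨0, by simp⟩
  bag_edge u v _ := ⟨0, by simp, by simp⟩
  bag_conv i j k hij hjk v hvi hvk := by
    have : (j : ℕ) = (i : ℕ) ∨ (j : ℕ) = (k : ℕ) := by omega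
    rcases this with h | h
    · rwa [show j = i from Fin.ext h]
    · rwa [show j = k from Fin.ext h]

lemma endPD_last (G : SimpleGraph V) (W : Set V) :
    (↑((endPD G W).bag (Fin.last 1)) : Set V) = W := by
  ext v
  simp [endPD, Fin.last]

lemma exists_opt (G : SimpleGraph V) :
    ∃ (n : ℕ) (d : PathDecomp G (n + 1)), d.width ≤ pathwidth G := by
  have hne : {w | ∃ (n : ℕ) (d : PathDecomp G n), d.width ≤ w}.Nonempty :=
    ⟨(trivPD G).width, 1, trivPD G, le_rfl⟩
  obtain ⟨n, d, hd⟩ := Nat.sInf_mem hne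
  cases n with
  | zero => exact ⟨0, pad d, le_trans (pad_width d) hd⟩
  | succ m => exact ⟨m, d, hd⟩

lemma exists_end_opt (G : SimpleGraph V) (W : Set V) :
    ∃ (n : ℕ) (d : PathDecomp G (n + 1)),
      (↑(d.bag (Fin.last n)) : Set V) = W ∧ d.width ≤ pathwidthEnd G W := by
  have hne : {w | ∃ (n : ℕ) (d : PathDecomp G (n + 1)),
      (↑(d.bag (Fin.last n)) : Set V) = W ∧ d.width ≤ w}.Nonempty :=
    ⟨(endPD G W).width, 1, endPD G W, endPD_last G W, le_rfl⟩
  exact Nat.sInf_mem hne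

lemma pathwidthEnd_le (G : SimpleGraph V) (W : Set V) {w n : ℕ} (d : PathDecomp G (n + 1))
    (h1 : (↑(d.bag (Fin.last n)) : Set V) = W) (h2 : d.width ≤ w) :
    pathwidthEnd G W ≤ w :=
  Nat.sInf_le ⟨n, d, h1, h2⟩

lemma pathwidth_le (G : SimpleGraph V) {w n : ℕ} (d : PathDecomp G n) (h2 : d.width ≤ w) :
    pathwidth G ≤ w :=
  Nat.sInf_le ⟨n, d, h2⟩

/-- Every clique is contained in some bag of a path decomposition. -/
lemma helly {n : ℕ} (d : PathDecomp G (n + 1)) (S : Set V) (hS : G.IsClique S) :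
    ∃ t : Fin (n + 1), S ⊆ ↑(d.bag t) := by
  have hocc : ∀ v : V, (Finset.univ.filter (fun i => v ∈ d.bag i)).Nonempty := by
    intro v
    obtain ⟨i, hi⟩ := d.bag_cover v
    exact ⟨i, by simp [hi]⟩
  set occ : V → Finset (Fin (n + 1)) := fun v => Finset.univ.filter (fun i => v ∈ d.bag i)
    with hocc_def
  have hmem_occ : ∀ v i, i ∈ occ v ↔ v ∈ d.bag i := by intro v i; simp [hocc_def]
  set a : V → Fin (n + 1) := fun v => (occ v).min' (hocc v) with ha
  set b : V → Fin (n + 1) := fun v => (occ v).max' (hocc v) with hb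
  have hconv : ∀ v (i : Fin (n + 1)), a v ≤ i → i ≤ b v → v ∈ d.bag i := by
    intro v i h1 h2
    exact d.bag_conv (a v) i (b v) h1 h2 v
      ((hmem_occ v _).mp (Finset.min'_mem _ _)) ((hmem_occ v _).mp (Finset.max'_mem _ _))
  rcases (S.toFinset).eq_empty_or_nonempty with hE | hNE
  · exact ⟨0, fun v hv => absurd (Set.mem_toFinset.mpr hv) (by simp [hE])⟩
  · obtain ⟨u, hu, hut⟩ := Finset.exists_mem_eq_sup' hNE a
    refine ⟨S.toFinset.sup' hNE a, fun v hv => ?_⟩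
    have hvF : v ∈ S.toFinset := Set.mem_toFinset.mpr hv
    have h1 : a v ≤ S.toFinset.sup' hNE a := Finset.le_sup' a hvF
    have h2 : S.toFinset.sup' hNE a ≤ b v := by
      rw [hut]
      by_cases huv : u = v
      · subst huv; exact Finset.min'_le _ _ (Finset.max'_mem _ _)
      · have hadj : G.Adj u v := hS (Set.mem_toFinset.mp hu) hv huv
        obtain ⟨i, hui, hvi⟩ := d.bag_edge u v hadj
        exact le_trans (Finset.min'_le _ _ ((hmem_occ u i).mpr hui))
          (Finset.le_max' _ _ ((hmem_occ v i).mpr hvi))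
    exact Finset.mem_coe.mpr (hconv v _ h1 h2)

end PW

open PW

lemma pw_le_max {V : Type} [Fintype V] [DecidableEq V]
    (G : SimpleGraph V) (C : Set V) (hS : G.IsClique (Set.univ \ C))
    (L : Set V) (hL : L ⊆ C) :
    pathwidth G ≤ max (max
        (pathwidthEnd (G.induce (closedNbhd G L))
          {x : ↥(closedNbhd G L) | ↑x ∈ nbhd G L})
        (pathwidthEnd (G.induce (closedNbhd G (C \ closedNbhd G L)))
          {x : ↥(closedNbhd G (C \ closedNbhd G L)) | ↑x ∈ nbhd G (C \ closedNbhd G L)}))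
        (((Set.univ \ C) ∪ nbhd G L).ncard - 1) := by
  set A := closedNbhd G L with hAdef
  set R := C \ A with hRdef
  set B := closedNbhd G R with hBdef
  set M := (Set.univ \ C) ∪ nbhd G L with hMdef
  set e1 := pathwidthEnd (G.induce A) {x : ↥A | ↑x ∈ nbhd G L} with he1
  set e2 := pathwidthEnd (G.induce B) {x : ↥B | ↑x ∈ nbhd G R} with he2
  set c := M.ncard - 1 with hc
  -- basic set facts
  have hLA : L ⊆ A := Set.subset_union_right
  have hNLA : nbhd G L ⊆ A := Set.subset_union_left
  have hNLM : nbhd G L ⊆ M := Set.subset_union_right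
  have hRB : R ⊆ B := Set.subset_union_right
  have hNRB : nbhd G R ⊆ B := Set.subset_union_left
  have hSM : ∀ v, v ∉ C → v ∈ M := fun v hv => Set.mem_union_left _ ⟨trivial, hv⟩
  have hMA : ∀ v, v ∈ M → v ∈ A → v ∈ nbhd G L := by
    rintro v (⟨-, hvC⟩ | hvN) hvA
    · rcases hvA with h | h
      · exact h
      · exact absurd (hL h) hvC
    · exact hvN
  have hAdjL : ∀ u v, G.Adj u v → u ∈ L → v ∈ A := by
    intro u v hadj hu
    by_cases hv : v ∈ L
    · exact hLA hv
    · exact hNLA ⟨hv, u, hu, hadj⟩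
  have hAdjR : ∀ u v, G.Adj u v → u ∈ R → v ∈ B := by
    intro u v hadj hu
    by_cases hv : v ∈ R
    · exact hRB hv
    · exact hNRB ⟨hv, u, hu, hadj⟩
  have hNRM : nbhd G R ⊆ M := by
    rintro u ⟨huR, r, hrR, hadj⟩
    by_cases hC : u ∈ C
    · have huA : u ∈ A := by
        by_contra huA
        exact huR ⟨hC, huA⟩
      have huL : u ∉ L := fun huL => hrR.2 (hAdjL u r hadj.symm huL)
      rcases huA with h | h
      · exact hNLM h
      · exact absurd h huL
    · exact hSM u hC
  have hAB : ∀ v, v ∈ A → v ∈ B → v ∈ nbhd G L ∧ v ∈ nbhd G R := by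
    intro v hvA hvB
    rcases hvB with h | h
    · exact ⟨hMA v (hNRM h) hvA, h⟩
    · exact absurd hvA h.2
  have hMB : ∀ v, v ∈ M → v ∈ B → v ∈ nbhd G R := by
    intro v hvM hvB
    rcases hvB with h | h
    · exact h
    · rcases hvM with h2 | h2
      · exact absurd h.1 h2.2
      · exact absurd (hNLA h2) h.2
  have hcover : ∀ v : V, v ∈ A ∨ v ∈ M ∨ v ∈ B := by
    intro v
    by_cases hC : v ∈ C
    · by_cases hA : v ∈ A
      · exact Or.inl hA
      · exact Or.inr (Or.inr (hRB ⟨hC, hA⟩))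
    · exact Or.inr (Or.inl (hSM v hC))
  have hedge3 : ∀ u v, G.Adj u v →
      (u ∈ A ∧ v ∈ A) ∨ (u ∈ M ∧ v ∈ M) ∨ (u ∈ B ∧ v ∈ B) := by
    have key : ∀ u v, G.Adj u v → u ∈ A →
        (u ∈ A ∧ v ∈ A) ∨ (u ∈ M ∧ v ∈ M) ∨ (u ∈ B ∧ v ∈ B) := by
      intro u v hadj hu
      by_cases hv : v ∈ A
      · exact Or.inl ⟨hu, hv⟩
      · by_cases hvC : v ∈ C
        · have hvR : v ∈ R := ⟨hvC, hv⟩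
          exact Or.inr (Or.inr ⟨hAdjR v u hadj.symm hvR, hRB hvR⟩)
        · have huN : u ∈ nbhd G L := by
            rcases hu with h | h
            · exact h
            · exact absurd (hAdjL u v hadj h) hv
          exact Or.inr (Or.inl ⟨hNLM huN, hSM v hvC⟩)
    intro u v hadj
    by_cases hu : u ∈ A
    · exact key u v hadj hu
    · by_cases hv : v ∈ A
      · rcases key v u hadj.symm hv with h | h | h
        · exact Or.inl ⟨h.2, h.1⟩
        · exact Or.inr (Or.inl ⟨h.2, h.1⟩)
        · exact Or.inr (Or.inr ⟨h.2, h.1⟩)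
      · by_cases huC : u ∈ C
        · have huR : u ∈ R := ⟨huC, hu⟩
          exact Or.inr (Or.inr ⟨hRB huR, hAdjR u v hadj huR⟩)
        · by_cases hvC : v ∈ C
          · have hvR : v ∈ R := ⟨hvC, hv⟩
            exact Or.inr (Or.inr ⟨hAdjR v u hadj.symm hvR, hRB hvR⟩)
          · exact Or.inr (Or.inl ⟨hSM u huC, hSM v hvC⟩)
  -- extract optimal end decompositions
  obtain ⟨n1, d1, hend1, hw1⟩ := PW.exists_end_opt (G.induce A) {x : ↥A | ↑x ∈ nbhd G L}
  obtain ⟨n2, d2, hend2, hw2⟩ := PW.exists_end_opt (G.induce B) {x : ↥B | ↑x ∈ nbhd G R}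
  have hlast1 : ∀ (v : V) (hv : v ∈ A),
      (⟨v, hv⟩ : ↥A) ∈ d1.bag (Fin.last n1) ↔ v ∈ nbhd G L := by
    intro v hv
    have := Set.ext_iff.mp hend1 ⟨v, hv⟩
    simpa using this
  have hlast2 : ∀ (v : V) (hv : v ∈ B),
      (⟨v, hv⟩ : ↥B) ∈ d2.bag (Fin.last n2) ↔ v ∈ nbhd G R := by
    intro v hv
    have := Set.ext_iff.mp hend2 ⟨v, hv⟩
    simpa using this
  -- the glued decomposition
  set F : ℕ → Finset V := fun j =>
    if h1 : j ≤ n1 then (d1.bag ⟨j, by omega⟩).image Subtype.val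
    else if h2 : j = n1 + 1 then M.toFinset
    else if h3 : j ≤ n1 + 2 + n2 then (d2.bag ⟨n1 + 2 + n2 - j, by omega⟩).image Subtype.val
    else ∅ with hFdef
  have hm1 : ∀ (j : ℕ) (h : j ≤ n1) (v : V),
      v ∈ F j ↔ ∃ hv : v ∈ A, ⟨v, hv⟩ ∈ d1.bag ⟨j, by omega⟩ := by
    intro j h v
    rw [hFdef]
    simp only [dif_pos h]
    exact PW.mem_image_val _ _
  have hm2 : ∀ v : V, v ∈ F (n1 + 1) ↔ v ∈ M := by
    intro v
    rw [hFdef]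
    simp only [dif_neg (by omega : ¬ n1 + 1 ≤ n1), dif_pos rfl]
    exact Set.mem_toFinset
  have hm3 : ∀ (j : ℕ) (ha : n1 + 2 ≤ j) (hb : j ≤ n1 + 2 + n2) (v : V),
      v ∈ F j ↔ ∃ hv : v ∈ B, ⟨v, hv⟩ ∈ d2.bag ⟨n1 + 2 + n2 - j, by omega⟩ := by
    intro j ha hb v
    rw [hFdef]
    simp only [dif_neg (by omega : ¬ j ≤ n1), dif_neg (by omega : ¬ j = n1 + 1), dif_pos hb]
    exact PW.mem_image_val _ _
  have hbagD : ∀ (j j' : ℕ) (h : j = j') (v : V), v ∈ F j → v ∈ F j' := by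
    rintro j j' rfl v h; exact h
  have hcov : ∀ v : V, ∃ i : Fin (n1 + n2 + 3), v ∈ F (i : ℕ) := by
    intro v
    rcases hcover v with hvA | hvM | hvB
    · obtain ⟨i, hi⟩ := d1.bag_cover ⟨v, hvA⟩
      refine ⟨⟨(i : ℕ), by omega⟩, (hm1 (i : ℕ) (by omega) v).mpr ⟨hvA, ?_⟩⟩
      exact hi
    · exact ⟨⟨n1 + 1, by omega⟩, (hm2 v).mpr hvM⟩
    · obtain ⟨i, hi⟩ := d2.bag_cover ⟨v, hvB⟩
      refine ⟨⟨n1 + 2 + n2 - (i : ℕ), by omega⟩, ?_⟩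
      show v ∈ F (n1 + 2 + n2 - (i : ℕ))
      refine (hm3 _ (by omega) (by omega) v).mpr ⟨hvB, ?_⟩
      have hx : n1 + 2 + n2 - (n1 + 2 + n2 - (i : ℕ)) = (i : ℕ) := by omega
      simp only [hx]
      exact hi
  have hedg : ∀ u v, G.Adj u v → ∃ i : Fin (n1 + n2 + 3), u ∈ F (i : ℕ) ∧ v ∈ F (i : ℕ) := by
    intro u v hadj
    rcases hedge3 u v hadj with ⟨hu, hv⟩ | ⟨hu, hv⟩ | ⟨hu, hv⟩
    · obtain ⟨i, hui, hvi⟩ := d1.bag_edge ⟨u, hu⟩ ⟨v, hv⟩ hadj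
      exact ⟨⟨(i : ℕ), by omega⟩, (hm1 (i : ℕ) (by omega) u).mpr ⟨hu, hui⟩,
        (hm1 (i : ℕ) (by omega) v).mpr ⟨hv, hvi⟩⟩
    · exact ⟨⟨n1 + 1, by omega⟩, (hm2 u).mpr hu, (hm2 v).mpr hv⟩
    · obtain ⟨i, hui, hvi⟩ := d2.bag_edge ⟨u, hu⟩ ⟨v, hv⟩ hadj
      have hidx : n1 + 2 + n2 - (n1 + 2 + n2 - (i : ℕ)) = (i : ℕ) := by omega
      refine ⟨⟨n1 + 2 + n2 - (i : ℕ), by omega⟩, ?_, ?_⟩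
      · show u ∈ F (n1 + 2 + n2 - (i : ℕ))
        refine (hm3 _ (by omega) (by omega) u).mpr ⟨hu, ?_⟩
        simp only [hidx]; exact hui
      · show v ∈ F (n1 + 2 + n2 - (i : ℕ))
        refine (hm3 _ (by omega) (by omega) v).mpr ⟨hv, ?_⟩
        simp only [hidx]; exact hvi
  have hcnv : ∀ i j k : Fin (n1 + n2 + 3), i ≤ j → j ≤ k →
      ∀ v, v ∈ F (i : ℕ) → v ∈ F (k : ℕ) → v ∈ F (j : ℕ) := by
    intro i j k hij hjk v hvi hvk
    have hij' : (i : ℕ) ≤ (j : ℕ) := hij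
    have hjk' : (j : ℕ) ≤ (k : ℕ) := hjk
    have hkN : (k : ℕ) < n1 + n2 + 3 := k.isLt
    by_cases hk1 : (k : ℕ) ≤ n1
    · -- all in region 1
      obtain ⟨hvA, hmi⟩ := (hm1 (i : ℕ) (by omega) v).mp hvi
      obtain ⟨hvA', hmk⟩ := (hm1 (k : ℕ) hk1 v).mp hvk
      refine (hm1 (j : ℕ) (by omega) v).mpr ⟨hvA, ?_⟩
      exact d1.bag_conv ⟨(i : ℕ), by omega⟩ ⟨(j : ℕ), by omega⟩ ⟨(k : ℕ), by omega⟩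
        hij' hjk' _ hmi hmk
    · by_cases hi2 : n1 + 2 ≤ (i : ℕ)
      · -- all in region 2
        obtain ⟨hvB, hmi⟩ := (hm3 (i : ℕ) hi2 (by omega) v).mp hvi
        obtain ⟨hvB', hmk⟩ := (hm3 (k : ℕ) (by omega) (by omega) v).mp hvk
        refine (hm3 (j : ℕ) (by omega) (by omega) v).mpr ⟨hvB, ?_⟩
        refine d2.bag_conv ⟨n1 + 2 + n2 - (k : ℕ), by omega⟩ ⟨n1 + 2 + n2 - (j : ℕ), by omega⟩
          ⟨n1 + 2 + n2 - (i : ℕ), by omega⟩ ?_ ?_ _ hmk hmi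
        · exact Nat.sub_le_sub_left hjk' _
        · exact Nat.sub_le_sub_left hij' _
      · by_cases hi1 : (i : ℕ) ≤ n1
        · obtain ⟨hvA, hmi⟩ := (hm1 (i : ℕ) hi1 v).mp hvi
          by_cases hk2 : n1 + 2 ≤ (k : ℕ)
          · -- region 1 to region 2
            obtain ⟨hvB, hmk⟩ := (hm3 (k : ℕ) hk2 (by omega) v).mp hvk
            obtain ⟨hvNL, hvNR⟩ := hAB v hvA hvB
            by_cases hj1 : (j : ℕ) ≤ n1
            · refine (hm1 (j : ℕ) hj1 v).mpr ⟨hvA, ?_⟩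
              exact d1.bag_conv ⟨(i : ℕ), by omega⟩ ⟨(j : ℕ), by omega⟩ (Fin.last n1)
                hij' (by simpa [Fin.le_def, Fin.last] using hj1) _ hmi ((hlast1 v hvA).mpr hvNL)
            · by_cases hj2 : (j : ℕ) = n1 + 1
              · refine hbagD (n1 + 1) (j : ℕ) hj2.symm v ((hm2 v).mpr (hNLM hvNL))
              · refine (hm3 (j : ℕ) (by omega) (by omega) v).mpr ⟨hvB, ?_⟩
                refine d2.bag_conv ⟨n1 + 2 + n2 - (k : ℕ), by omega⟩
                  ⟨n1 + 2 + n2 - (j : ℕ), by omega⟩ (Fin.last n2)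
                  (Nat.sub_le_sub_left hjk' _)
                  (by simp [Fin.le_def, Fin.last]; omega) _ hmk ((hlast2 v hvB).mpr hvNR)
          · -- k = n1+1
            have hkk : (k : ℕ) = n1 + 1 := by omega
            have hvM : v ∈ M := (hm2 v).mp (hbagD (k : ℕ) (n1 + 1) hkk v hvk)
            have hvNL : v ∈ nbhd G L := hMA v hvM hvA
            by_cases hj1 : (j : ℕ) ≤ n1
            · refine (hm1 (j : ℕ) hj1 v).mpr ⟨hvA, ?_⟩
              exact d1.bag_conv ⟨(i : ℕ), by omega⟩ ⟨(j : ℕ), by omega⟩ (Fin.last n1)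
                hij' (by simpa [Fin.le_def, Fin.last] using hj1) _ hmi ((hlast1 v hvA).mpr hvNL)
            · have hjj : (j : ℕ) = n1 + 1 := by omega
              exact hbagD (k : ℕ) (j : ℕ) (by omega) v hvk
        · -- i = n1+1
          have hii : (i : ℕ) = n1 + 1 := by omega
          have hvM : v ∈ M := (hm2 v).mp (hbagD (i : ℕ) (n1 + 1) hii v hvi)
          by_cases hk2 : n1 + 2 ≤ (k : ℕ)
          · obtain ⟨hvB, hmk⟩ := (hm3 (k : ℕ) hk2 (by omega) v).mp hvk
            have hvNR : v ∈ nbhd G R := hMB v hvM hvB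
            by_cases hj2 : (j : ℕ) = n1 + 1
            · exact hbagD (i : ℕ) (j : ℕ) (by omega) v hvi
            · refine (hm3 (j : ℕ) (by omega) (by omega) v).mpr ⟨hvB, ?_⟩
              refine d2.bag_conv ⟨n1 + 2 + n2 - (k : ℕ), by omega⟩
                ⟨n1 + 2 + n2 - (j : ℕ), by omega⟩ (Fin.last n2)
                (Nat.sub_le_sub_left hjk' _)
                (by simp [Fin.le_def, Fin.last]; omega) _ hmk ((hlast2 v hvB).mpr hvNR)
          · have hkk : (k : ℕ) = n1 + 1 := by omega
            exact hbagD (i : ℕ) (j : ℕ) (by omega) v hvi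
  refine PW.pathwidth_le G (n := n1 + n2 + 3) ⟨fun i => F (i : ℕ), hcov, hedg, hcnv⟩ ?_
  -- width bound
  have hsup1 : ∀ i : Fin (n1 + 1), (d1.bag i).card ≤ e1 + 1 := by
    intro i
    have h1 : (d1.bag i).card ≤ Finset.univ.sup fun i => (d1.bag i).card :=
      Finset.le_sup (f := fun i => (d1.bag i).card) (Finset.mem_univ i)
    have h2 : (Finset.univ.sup fun i => (d1.bag i).card) - 1 ≤ e1 := hw1
    omega
  have hsup2 : ∀ i : Fin (n2 + 1), (d2.bag i).card ≤ e2 + 1 := by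
    intro i
    have h1 : (d2.bag i).card ≤ Finset.univ.sup fun i => (d2.bag i).card :=
      Finset.le_sup (f := fun i => (d2.bag i).card) (Finset.mem_univ i)
    have h2 : (Finset.univ.sup fun i => (d2.bag i).card) - 1 ≤ e2 := hw2
    omega
  have hMcard : M.toFinset.card ≤ c + 1 := by
    have : M.ncard = M.toFinset.card := Set.ncard_eq_toFinset_card' M
    omega
  have hbound : ∀ j : ℕ, (F j).card ≤ max (max e1 e2) c + 1 := by
    intro j
    by_cases h1 : j ≤ n1
    · rw [hFdef]
      simp only [dif_pos h1]
      rw [PW.card_image_val]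
      exact le_trans (hsup1 _) (Nat.add_le_add_right (le_trans (le_max_left _ _) (le_max_left _ _)) 1)
    · by_cases h2 : j = n1 + 1
      · rw [hFdef]
        simp only [dif_neg h1, dif_pos h2]
        exact le_trans hMcard (Nat.add_le_add_right (le_max_right _ _) 1)
      · by_cases h3 : j ≤ n1 + 2 + n2
        · rw [hFdef]
          simp only [dif_neg h1, dif_neg h2, dif_pos h3]
          rw [PW.card_image_val]
          exact le_trans (hsup2 _)
            (Nat.add_le_add_right (le_trans (le_max_right _ _) (le_max_left _ _)) 1)
        · rw [hFdef]
          simp only [dif_neg h1, dif_neg h2, dif_neg h3]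
          simp
  show (Finset.univ.sup fun i : Fin (n1 + n2 + 3) => (F (i : ℕ)).card) - 1 ≤ max (max e1 e2) c
  have : (Finset.univ.sup fun i : Fin (n1 + n2 + 3) => (F (i : ℕ)).card) ≤ max (max e1 e2) c + 1 :=
    Finset.sup_le fun i _ => hbound (i : ℕ)
  omega

lemma exists_good_L {V : Type} [Fintype V] [DecidableEq V]
    (G : SimpleGraph V) (C : Set V) (hS : G.IsClique (Set.univ \ C)) :
    ∃ L : Set V, L ⊆ C ∧ max (max
        (pathwidthEnd (G.induce (closedNbhd G L))
          {x : ↥(closedNbhd G L) | ↑x ∈ nbhd G L})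
        (pathwidthEnd (G.induce (closedNbhd G (C \ closedNbhd G L)))
          {x : ↥(closedNbhd G (C \ closedNbhd G L)) | ↑x ∈ nbhd G (C \ closedNbhd G L)}))
        (((Set.univ \ C) ∪ nbhd G L).ncard - 1) ≤ pathwidth G := by
  obtain ⟨n, d, hw⟩ := PW.exists_opt G
  obtain ⟨t, hSt⟩ := PW.helly d (Set.univ \ C) hS
  set k := pathwidth G with hk
  have hsupd : ∀ i : Fin (n + 1), (d.bag i).card ≤ k + 1 := by
    intro i
    have h1 : (d.bag i).card ≤ Finset.univ.sup fun i => (d.bag i).card :=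
      Finset.le_sup (f := fun i => (d.bag i).card) (Finset.mem_univ i)
    have h2 : (Finset.univ.sup fun i => (d.bag i).card) - 1 ≤ k := hw
    omega
  set L : Set V := {v | v ∈ C ∧ ∀ i : Fin (n + 1), t ≤ i → v ∉ d.bag i} with hLdef
  have hLC : L ⊆ C := fun v hv => hv.1
  refine ⟨L, hLC, ?_⟩
  set A := closedNbhd G L with hAdef
  set R := C \ A with hRdef
  set B := closedNbhd G R with hBdef
  have hLA : L ⊆ A := Set.subset_union_right
  have hNLA : nbhd G L ⊆ A := Set.subset_union_left
  have hRB : R ⊆ B := Set.subset_union_right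
  have hNRB : nbhd G R ⊆ B := Set.subset_union_left
  have hLleft : ∀ v ∈ L, ∀ i : Fin (n + 1), v ∈ d.bag i → (i : ℕ) < (t : ℕ) := by
    intro v hv i hvi
    by_contra h
    exact hv.2 i (by omega : (t : ℕ) ≤ (i : ℕ)) hvi
  have hnotL : ∀ v, v ∈ C → v ∉ L → ∃ i : Fin (n + 1), (t : ℕ) ≤ (i : ℕ) ∧ v ∈ d.bag i := by
    intro v hvC hvL
    rw [hLdef] at hvL
    simp only [Set.mem_setOf_eq, not_and, not_forall] at hvL
    obtain ⟨i, hti, hvi⟩ := hvL hvC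
    exact ⟨i, hti, not_not.mp hvi⟩
  have hNLt : ∀ u ∈ nbhd G L, u ∈ d.bag t := by
    rintro u ⟨huL, w, hwL, hadj⟩
    obtain ⟨i, hwi, hui⟩ := d.bag_edge w u hadj
    have hit : (i : ℕ) < (t : ℕ) := hLleft w hwL i hwi
    by_cases hC : u ∈ C
    · obtain ⟨i', hti', hui'⟩ := hnotL u hC huL
      exact d.bag_conv i t i' (by omega : (i : ℕ) ≤ (t : ℕ)) hti' u hui hui'
    · exact hSt ⟨trivial, hC⟩
  have hNRt : ∀ u ∈ nbhd G R, u ∈ d.bag t := by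
    rintro u ⟨huR, r, hrR, hadj⟩
    by_cases hC : u ∈ C
    · have huA : u ∈ A := by
        by_contra huA
        exact huR ⟨hC, huA⟩
      have huL : u ∉ L := by
        intro huL
        refine hrR.2 (hNLA ⟨?_, u, huL, hadj.symm⟩)
        exact fun hrL => hrR.2 (hLA hrL)
      rcases huA with h | h
      · exact hNLt u h
      · exact absurd h huL
    · exact hSt ⟨trivial, hC⟩
  have hRright : ∀ v ∈ R, ∃ i : Fin (n + 1), (t : ℕ) ≤ (i : ℕ) ∧ v ∈ d.bag i :=
    fun v hv => hnotL v hv.1 (fun hvL => hv.2 (hLA hvL))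
  have hLcov : ∀ v ∈ L, ∃ i : Fin (n + 1), (i : ℕ) < (t : ℕ) ∧ v ∈ d.bag i := by
    intro v hv
    obtain ⟨i, hi⟩ := d.bag_cover v
    exact ⟨i, hLleft v hv i hi, hi⟩
  have hBt : ∀ z, z ∈ B → ∀ j : Fin (n + 1), (j : ℕ) ≤ (t : ℕ) → z ∈ d.bag j → z ∈ d.bag t := by
    intro z hz j hjt hzj
    rcases hz with h | h
    · exact hNRt z h
    · obtain ⟨i', hti', hzi'⟩ := hRright z h
      exact d.bag_conv j t i' hjt hti' z hzj hzi'
  -- Bound 3 : the clique part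
  have hb3 : ((Set.univ \ C) ∪ nbhd G L).ncard - 1 ≤ k := by
    have hsub : (Set.univ \ C) ∪ nbhd G L ⊆ ↑(d.bag t) := by
      rintro v (hv | hv)
      · exact hSt hv
      · exact hNLt v hv
    have h1 : ((Set.univ \ C) ∪ nbhd G L).ncard ≤ (↑(d.bag t) : Set V).ncard :=
      Set.ncard_le_ncard hsub (Set.toFinite _)
    rw [Set.ncard_coe_finset] at h1
    have := hsupd t
    omega
  -- Bound 1 : left part
  have hb1 : pathwidthEnd (G.induce A) {x : ↥A | ↑x ∈ nbhd G L} ≤ k := by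
    set F1 : Fin ((t : ℕ) + 1) → Finset ↥A := fun i =>
      if h : (i : ℕ) < (t : ℕ) then (d.bag ⟨(i : ℕ), by omega⟩).subtype (· ∈ A)
      else ((d.bag t).subtype (· ∈ A)).filter (fun x => (x : V) ∈ nbhd G L) with hF1def
    have hmr : ∀ (j : ℕ) (h : j < (t : ℕ)) (x : ↥A),
        x ∈ F1 ⟨j, by omega⟩ ↔ (x : V) ∈ d.bag ⟨j, by omega⟩ := by
      intro j h x
      rw [hF1def]
      simp only [dif_pos h]
      exact Finset.mem_subtype
    have hml : ∀ x : ↥A, x ∈ F1 ⟨(t : ℕ), by omega⟩ ↔ (x : V) ∈ nbhd G L := by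
      intro x
      rw [hF1def]
      simp only [dif_neg (lt_irrefl (t : ℕ)), Finset.mem_filter, Finset.mem_subtype]
      exact ⟨fun h => h.2, fun h => ⟨hNLt _ h, h⟩⟩
    refine PW.pathwidthEnd_le (G.induce A) _ (n := (t : ℕ))
      ⟨F1, ?_, ?_, ?_⟩ ?_ ?_
    · -- cover
      rintro ⟨v, hvA⟩
      rcases hvA with h | h
      · exact ⟨⟨(t : ℕ), by omega⟩, (hml _).mpr h⟩
      · obtain ⟨i, hit, hvi⟩ := hLcov v h
        exact ⟨⟨(i : ℕ), by omega⟩, (hmr (i : ℕ) hit _).mpr hvi⟩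
    · -- edges
      rintro ⟨u, huA⟩ ⟨v, hvA⟩ hadj
      obtain ⟨i, hui, hvi⟩ := d.bag_edge u v hadj
      by_cases hit : (i : ℕ) < (t : ℕ)
      · exact ⟨⟨(i : ℕ), by omega⟩, (hmr _ hit _).mpr hui, (hmr _ hit _).mpr hvi⟩
      · have huN : u ∈ nbhd G L := by
          rcases huA with h | h
          · exact h
          · exact absurd (hLleft u h i hui) hit
        have hvN : v ∈ nbhd G L := by
          rcases hvA with h | h
          · exact h
          · exact absurd (hLleft v h i hvi) hit
        exact ⟨⟨(t : ℕ), by omega⟩, (hml _).mpr huN, (hml _).mpr hvN⟩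
    · -- convexity
      intro i j k' hij hjk v hvi hvk
      have hij' : (i : ℕ) ≤ (j : ℕ) := hij
      have hjk' : (j : ℕ) ≤ (k' : ℕ) := hjk
      by_cases hkt : (k' : ℕ) < (t : ℕ)
      · have hvi' := (hmr (i : ℕ) (by omega) _).mp (by exact hvi)
        have hvk' := (hmr (k' : ℕ) (by omega) _).mp (by exact hvk)
        refine (hmr (j : ℕ) (by omega) _).mpr ?_
        exact d.bag_conv ⟨(i : ℕ), by omega⟩ ⟨(j : ℕ), by omega⟩ ⟨(k' : ℕ), by omega⟩
          hij' hjk' _ hvi' hvk'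
      · have hkt' : (k' : ℕ) = (t : ℕ) := by omega
        by_cases hjt : (j : ℕ) < (t : ℕ)
        · have hvi' := (hmr (i : ℕ) (by omega) _).mp (by exact hvi)
          have hvN : (v : V) ∈ nbhd G L := (hml _).mp (by
            have : k' = ⟨(t : ℕ), by omega⟩ := Fin.ext hkt'
            rwa [this] at hvk)
          refine (hmr (j : ℕ) hjt _).mpr ?_
          exact d.bag_conv ⟨(i : ℕ), by omega⟩ ⟨(j : ℕ), by omega⟩ t hij'
            (by omega : (j : ℕ) ≤ (t : ℕ)) _ hvi' (hNLt _ hvN)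
        · have : j = k' := Fin.ext (by omega)
          rwa [this]
    · -- end bag
      ext x
      have hlast : (Fin.last (t : ℕ)) = (⟨(t : ℕ), by omega⟩ : Fin ((t : ℕ) + 1)) := rfl
      simp only [Finset.mem_coe, Set.mem_setOf_eq, hlast]
      rw [hml x]
    · -- width
      have hbound : ∀ i : Fin ((t : ℕ) + 1), (F1 i).card ≤ k + 1 := by
        intro i
        rw [hF1def]
        by_cases h : (i : ℕ) < (t : ℕ)
        · simp only [dif_pos h]
          calc ((d.bag ⟨(i : ℕ), by omega⟩).subtype (· ∈ A)).card
              = ((d.bag ⟨(i : ℕ), by omega⟩).filter (· ∈ A)).card := Finset.card_subtype _ _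
            _ ≤ (d.bag ⟨(i : ℕ), by omega⟩).card := Finset.card_filter_le _ _
            _ ≤ k + 1 := hsupd _
        · simp only [dif_neg h]
          refine le_trans (Finset.card_filter_le _ _) ?_
          refine le_trans (le_of_eq (Finset.card_subtype _ _)) ?_
          exact le_trans (Finset.card_filter_le _ _) (hsupd _)
      show (Finset.univ.sup fun i => (F1 i).card) - 1 ≤ k
      have : (Finset.univ.sup fun i => (F1 i).card) ≤ k + 1 :=
        Finset.sup_le fun i _ => hbound i
      omega
  -- Bound 2 : right part
  have hb2 : pathwidthEnd (G.induce B) {x : ↥B | ↑x ∈ nbhd G R} ≤ k := by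
    set m2 := n - (t : ℕ) with hm2def
    set F2 : Fin (m2 + 1 + 1) → Finset ↥B := fun i =>
      if h : (i : ℕ) ≤ m2 then (d.bag ⟨n - (i : ℕ), by omega⟩).subtype (· ∈ B)
      else ((d.bag t).subtype (· ∈ B)).filter (fun x => (x : V) ∈ nbhd G R) with hF2def
    have htn : (t : ℕ) ≤ n := by omega
    have hmr : ∀ (j : ℕ) (h : j ≤ m2) (x : ↥B),
        x ∈ F2 ⟨j, by omega⟩ ↔ (x : V) ∈ d.bag ⟨n - j, by omega⟩ := by
      intro j h x
      rw [hF2def]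
      simp only [dif_pos h]
      exact Finset.mem_subtype
    have hml : ∀ x : ↥B, x ∈ F2 ⟨m2 + 1, by omega⟩ ↔ (x : V) ∈ nbhd G R := by
      intro x
      rw [hF2def]
      simp only [dif_neg (by omega : ¬ m2 + 1 ≤ m2), Finset.mem_filter, Finset.mem_subtype]
      exact ⟨fun h => h.2, fun h => ⟨hNRt _ h, h⟩⟩
    refine PW.pathwidthEnd_le (G.induce B) _ (n := m2 + 1)
      ⟨F2, ?_, ?_, ?_⟩ ?_ ?_
    · -- cover
      rintro ⟨v, hvB⟩
      rcases hvB with h | h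
      · exact ⟨⟨m2 + 1, by omega⟩, (hml _).mpr h⟩
      · obtain ⟨i, hti, hvi⟩ := hRright v h
        refine ⟨⟨n - (i : ℕ), by omega⟩, ?_⟩
        show _ ∈ F2 ⟨n - (i : ℕ), by omega⟩
        refine (hmr (n - (i : ℕ)) (by omega) _).mpr ?_
        have hx : n - (n - (i : ℕ)) = (i : ℕ) := by omega
        simp only [hx]
        exact hvi
    · -- edges
      rintro ⟨u, huB⟩ ⟨v, hvB⟩ hadj
      obtain ⟨i, hui, hvi⟩ := d.bag_edge u v hadj
      by_cases hti : (t : ℕ) ≤ (i : ℕ)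
      · refine ⟨⟨n - (i : ℕ), by omega⟩, ?_, ?_⟩
        · show _ ∈ F2 ⟨n - (i : ℕ), by omega⟩
          refine (hmr (n - (i : ℕ)) (by omega) _).mpr ?_
          have hx : n - (n - (i : ℕ)) = (i : ℕ) := by omega
          simp only [hx]; exact hui
        · show _ ∈ F2 ⟨n - (i : ℕ), by omega⟩
          refine (hmr (n - (i : ℕ)) (by omega) _).mpr ?_
          have hx : n - (n - (i : ℕ)) = (i : ℕ) := by omega
          simp only [hx]; exact hvi
      · have hut : u ∈ d.bag t := hBt u huB i (by omega) hui
        have hvt : v ∈ d.bag t := hBt v hvB i (by omega) hvi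
        refine ⟨⟨m2, by omega⟩, ?_, ?_⟩
        · refine (hmr m2 (le_refl m2) _).mpr ?_
          have hx : n - m2 = (t : ℕ) := by omega
          simp only [hx]
          exact hut
        · refine (hmr m2 (le_refl m2) _).mpr ?_
          have hx : n - m2 = (t : ℕ) := by omega
          simp only [hx]
          exact hvt
    · -- convexity
      intro i j k' hij hjk v hvi hvk
      have hij' : (i : ℕ) ≤ (j : ℕ) := hij
      have hjk' : (j : ℕ) ≤ (k' : ℕ) := hjk
      by_cases hkm : (k' : ℕ) ≤ m2
      · have hvi' := (hmr (i : ℕ) (by omega) _).mp (by exact hvi)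
        have hvk' := (hmr (k' : ℕ) hkm _).mp (by exact hvk)
        refine (hmr (j : ℕ) (by omega) _).mpr ?_
        refine d.bag_conv ⟨n - (k' : ℕ), by omega⟩ ⟨n - (j : ℕ), by omega⟩
          ⟨n - (i : ℕ), by omega⟩ ?_ ?_ _ hvk' hvi'
        · exact Nat.sub_le_sub_left hjk' n
        · exact Nat.sub_le_sub_left hij' n
      · have hkm' : (k' : ℕ) = m2 + 1 := by omega
        by_cases hjm : (j : ℕ) ≤ m2
        · have hvi' := (hmr (i : ℕ) (by omega) _).mp (by exact hvi)
          have hvN : (v : V) ∈ nbhd G R := (hml _).mp (by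
            have : k' = ⟨m2 + 1, by omega⟩ := Fin.ext hkm'
            rwa [this] at hvk)
          refine (hmr (j : ℕ) hjm _).mpr ?_
          refine d.bag_conv t ⟨n - (j : ℕ), by omega⟩ ⟨n - (i : ℕ), by omega⟩
            ?_ ?_ _ (hNRt _ hvN) hvi'
          · show (t : ℕ) ≤ n - (j : ℕ)
            omega
          · exact Nat.sub_le_sub_left hij' n
        · have : j = k' := Fin.ext (by omega)
          rwa [this]
    · -- end bag
      ext x
      have hlast : (Fin.last (m2 + 1)) = (⟨m2 + 1, by omega⟩ : Fin (m2 + 1 + 1)) := rfl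
      simp only [Finset.mem_coe, Set.mem_setOf_eq, hlast]
      rw [hml x]
    · -- width
      have hbound : ∀ i : Fin (m2 + 1 + 1), (F2 i).card ≤ k + 1 := by
        intro i
        rw [hF2def]
        by_cases h : (i : ℕ) ≤ m2
        · simp only [dif_pos h]
          calc ((d.bag ⟨n - (i : ℕ), by omega⟩).subtype (· ∈ B)).card
              = ((d.bag ⟨n - (i : ℕ), by omega⟩).filter (· ∈ B)).card := Finset.card_subtype _ _
            _ ≤ (d.bag ⟨n - (i : ℕ), by omega⟩).card := Finset.card_filter_le _ _
            _ ≤ k + 1 := hsupd _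
        · simp only [dif_neg h]
          refine le_trans (Finset.card_filter_le _ _) ?_
          refine le_trans (le_of_eq (Finset.card_subtype _ _)) ?_
          exact le_trans (Finset.card_filter_le _ _) (hsupd _)
      show (Finset.univ.sup fun i => (F2 i).card) - 1 ≤ k
      have : (Finset.univ.sup fun i => (F2 i).card) ≤ k + 1 :=
        Finset.sup_le fun i _ => hbound i
      omega
  exact max_le (max_le hb1 hb2) hb3

theorem pathwidth_eq_min_over_subsets {V : Type} [Fintype V] [DecidableEq V]
    (G : SimpleGraph V) (C : Set V) (hS : G.IsClique (Set.univ \ C)) :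
    pathwidth G = sInf {m | ∃ L : Set V, L ⊆ C ∧
      m = max (max
        (pathwidthEnd (G.induce (closedNbhd G L))
          {x : ↥(closedNbhd G L) | ↑x ∈ nbhd G L})
        (pathwidthEnd (G.induce (closedNbhd G (C \ closedNbhd G L)))
          {x : ↥(closedNbhd G (C \ closedNbhd G L)) | ↑x ∈ nbhd G (C \ closedNbhd G L)}))
        (((Set.univ \ C) ∪ nbhd G L).ncard - 1)} := by
  apply le_antisymm
  · refine le_csInf ?_ ?_
    · obtain ⟨L, hL, h⟩ := exists_good_L G C hS
      exact ⟨_, L, hL, rfl⟩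
    · rintro m ⟨L, hL, rfl⟩
      exact pw_le_max G C hS L hL
  · obtain ⟨L, hL, h⟩ := exists_good_L G C hS
    exact le_trans (Nat.sInf_le ⟨L, hL, rfl⟩) h
end

section
/- Let G=(V,E) be a graph and C⊆V a set such that S=V∖C is a clique in G, and let L be a nonempty subset of C. Then pw(G[N[L]]; N(L)) = max{ |N(L)|, min_{u∈L} pw(G[N[L∖{u}]]; N(L∖{u})) }, where G[W] denotes the subgraph of G induced by W and the neighborhoods N(·), N[·] are taken in G. -/
/-- Auxiliary: a path decomposition "relative to a vertex set `A`", with bags in `V`. -/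
structure PD {V : Type} (G : SimpleGraph V) (A : Set V) (n : ℕ) where
  b : Fin n → Finset V
  sub : ∀ i, ↑(b i) ⊆ A
  cover : ∀ v ∈ A, ∃ i, v ∈ b i
  edge : ∀ x y, x ∈ A → y ∈ A → G.Adj x y → ∃ i, x ∈ b i ∧ y ∈ b i
  conv : ∀ i j k, i ≤ j → j ≤ k → ∀ v, v ∈ b i → v ∈ b k → v ∈ b j

lemma pwEnd_mem {V : Type} [Fintype V] [DecidableEq V] (G : SimpleGraph V)
    (A W : Set V) (n : ℕ) (d : PD G A (n+1)) (hlast : ↑(d.b (Fin.last n)) = W) :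
    ((Finset.univ.sup fun i => (d.b i).card) - 1) ∈
      {w | ∃ (m : ℕ) (e : PathDecomp (G.induce A) (m + 1)),
        (↑(e.bag (Fin.last m)) : Set ↥A) = {x : ↥A | ↑x ∈ W} ∧ e.width ≤ w} := by
  classical
  refine ⟨n, ⟨fun i => (d.b i).subtype (· ∈ A), ?_, ?_, ?_⟩, ?_, ?_⟩
  · intro v
    obtain ⟨i, hi⟩ := d.cover v.1 v.2
    exact ⟨i, Finset.mem_subtype.2 hi⟩
  · intro x y hxy
    obtain ⟨i, hx, hy⟩ := d.edge x.1 y.1 x.2 y.2 hxy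
    exact ⟨i, Finset.mem_subtype.2 hx, Finset.mem_subtype.2 hy⟩
  · intro i j k hij hjk v hvi hvk
    exact Finset.mem_subtype.2 (d.conv i j k hij hjk v.1 (Finset.mem_subtype.1 hvi)
      (Finset.mem_subtype.1 hvk))
  · ext x
    simp only [Finset.coe_sort_coe, Finset.mem_coe, Finset.mem_subtype, Set.mem_setOf_eq]
    rw [← hlast]; rfl
  · show (Finset.univ.sup fun i => ((d.b i).subtype (· ∈ A)).card) - 1 ≤ _
    have : ∀ i : Fin (n+1), ((d.b i).subtype (· ∈ A)).card ≤ (d.b i).card := by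
      intro i
      exact Finset.card_le_card_of_injOn Subtype.val (fun x hx => Finset.mem_subtype.1 hx)
        (fun a _ b _ h => Subtype.ext h)
    have h2 : (Finset.univ.sup fun i => ((d.b i).subtype (· ∈ A)).card) ≤
        Finset.univ.sup fun i => (d.b i).card :=
      Finset.sup_le fun i _ => le_trans (this i) (Finset.le_sup (f := fun i => (d.b i).card) (Finset.mem_univ i))
    exact Nat.sub_le_sub_right h2 1

lemma pwEnd_extract {V : Type} [Fintype V] [DecidableEq V] (G : SimpleGraph V)
    (A W : Set V) (hWA : W ⊆ A) :
    ∃ (n : ℕ) (d : PD G A (n+1)), ↑(d.b (Fin.last n)) = W ∧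
      (Finset.univ.sup fun i => (d.b i).card) - 1 ≤
        pathwidthEnd (G.induce A) {x : ↥A | ↑x ∈ W} := by
  classical
  -- the defining set is nonempty
  have hne : {w | ∃ (m : ℕ) (e : PathDecomp (G.induce A) (m + 1)),
      (↑(e.bag (Fin.last m)) : Set ↥A) = {x : ↥A | ↑x ∈ W} ∧ e.width ≤ w}.Nonempty := by
    refine ⟨_, pwEnd_mem G A W 1 ⟨![ (Set.toFinite A).toFinset, (Set.toFinite W).toFinset], ?_, ?_, ?_, ?_⟩ ?_⟩
    · intro i
      fin_cases i
      · show ((Set.toFinite A).toFinset : Set V) ⊆ A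
        rw [Set.Finite.coe_toFinset]
      · show ((Set.toFinite W).toFinset : Set V) ⊆ A
        rw [Set.Finite.coe_toFinset]; exact hWA
    · intro v hv
      exact ⟨0, by simpa [Set.Finite.mem_toFinset] using hv⟩
    · intro x y hx hy _
      exact ⟨0, by simpa [Set.Finite.mem_toFinset] using hx,
        by simpa [Set.Finite.mem_toFinset] using hy⟩
    · intro i j k hij hjk v hvi hvk
      fin_cases i <;> fin_cases j <;> fin_cases k <;> first | assumption | simp_all
    · show ((Set.toFinite W).toFinset : Set V) = W
      exact Set.Finite.coe_toFinset _
  obtain ⟨m, e, hend, hw⟩ := Nat.sInf_mem hne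
  refine ⟨m, ⟨fun i => (e.bag i).image Subtype.val, ?_, ?_, ?_, ?_⟩, ?_, ?_⟩
  · intro i x hx
    obtain ⟨a, _, rfl⟩ := Finset.mem_image.1 (Finset.mem_coe.1 hx)
    exact a.2
  · intro v hv
    obtain ⟨i, hi⟩ := e.bag_cover ⟨v, hv⟩
    exact ⟨i, Finset.mem_image.2 ⟨⟨v, hv⟩, hi, rfl⟩⟩
  · intro x y hx hy hxy
    obtain ⟨i, hxi, hyi⟩ := e.bag_edge ⟨x, hx⟩ ⟨y, hy⟩ hxy
    exact ⟨i, Finset.mem_image.2 ⟨⟨x, hx⟩, hxi, rfl⟩, Finset.mem_image.2 ⟨⟨y, hy⟩, hyi, rfl⟩⟩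
  · intro i j k hij hjk v hvi hvk
    obtain ⟨a, hai, rfl⟩ := Finset.mem_image.1 hvi
    obtain ⟨a', hak, ha'⟩ := Finset.mem_image.1 hvk
    have heq : a' = a := Subtype.ext ha'
    exact Finset.mem_image.2 ⟨a, e.bag_conv i j k hij hjk a hai (heq ▸ hak), rfl⟩
  · ext x
    simp only [Finset.coe_image, Set.mem_image, Finset.mem_coe]
    constructor
    · rintro ⟨a, ha, rfl⟩
      have : (a : ↥A) ∈ (↑(e.bag (Fin.last m)) : Set ↥A) := ha
      rw [hend] at this
      exact this
    · intro hx
      refine ⟨⟨x, hWA hx⟩, ?_, rfl⟩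
      have : (⟨x, hWA hx⟩ : ↥A) ∈ (↑(e.bag (Fin.last m)) : Set ↥A) := by rw [hend]; exact hx
      exact this
  · have : ∀ i : Fin (m+1), ((e.bag i).image Subtype.val).card = (e.bag i).card := by
      intro i
      exact Finset.card_image_of_injective _ Subtype.val_injective
    unfold PathDecomp.width at hw
    simp only [this]
    exact hw

lemma pwEnd_le {V : Type} [Fintype V] [DecidableEq V] (G : SimpleGraph V)
    (A W : Set V) (n : ℕ) (d : PD G A (n+1)) (hlast : ↑(d.b (Fin.last n)) = W) :
    pathwidthEnd (G.induce A) {x : ↥A | ↑x ∈ W} ≤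
      (Finset.univ.sup fun i => (d.b i).card) - 1 :=
  Nat.sInf_le (pwEnd_mem G A W n d hlast)

lemma nbhd_closed_facts {V : Type} (G : SimpleGraph V) (L : Set V) (u : V) (hu : u ∈ L) :
    closedNbhd G (L \ {u}) ⊆ closedNbhd G L ∧
    (∀ v, v ∈ nbhd G (L \ {u}) → v ∈ nbhd G L ∨ v = u) := by
  constructor
  · rintro x (⟨hxn, v, hv, hadj⟩ | hxl)
    · by_cases hxL : x ∈ L
      · exact Or.inr hxL
      · exact Or.inl ⟨hxL, v, hv.1, hadj⟩
    · exact Or.inr hxl.1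
  · rintro v ⟨hvn, w, hw, hadj⟩
    by_cases hvL : v ∈ L
    · right
      by_contra hne
      exact hvn ⟨hvL, hne⟩
    · exact Or.inl ⟨hvL, w, hw.1, hadj⟩

lemma pw_upper {V : Type} [Fintype V] [DecidableEq V] (G : SimpleGraph V)
    (L : Set V) (u : V) (hu : u ∈ L) :
    pathwidthEnd (G.induce (closedNbhd G L)) {x : ↥(closedNbhd G L) | ↑x ∈ nbhd G L} ≤
      max (nbhd G L).ncard
        (pathwidthEnd (G.induce (closedNbhd G (L \ {u})))
          {x : ↥(closedNbhd G (L \ {u})) | ↑x ∈ nbhd G (L \ {u})}) := by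
  classical
  set L' := L \ {u} with hL'
  set A := closedNbhd G L with hA
  set A' := closedNbhd G L' with hA'
  obtain ⟨hA'A, hW'W⟩ := nbhd_closed_facts G L u hu
  have hW'A' : nbhd G L' ⊆ A' := Set.subset_union_left
  have hWA : nbhd G L ⊆ A := Set.subset_union_left
  have hLA : L ⊆ A := Set.subset_union_right
  obtain ⟨n, d, hend, hwle⟩ := pwEnd_extract G A' (nbhd G L') hW'A'
  set WF : Finset V := (Set.toFinite (nbhd G L)).toFinset with hWF
  have hWFmem : ∀ x, x ∈ WF ↔ x ∈ nbhd G L := fun x => Set.Finite.mem_toFinset _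
  have hendmem : ∀ v, v ∈ d.b (Fin.last n) ↔ v ∈ nbhd G L' := by
    intro v
    rw [← hend]; rfl
  -- key: a vertex of A' that is in N(L) ∪ {u} lies in N(L')
  have key3 : ∀ v, v ∈ A' → (v ∈ nbhd G L ∨ v = u) → v ∈ nbhd G L' := by
    intro v hv hvor
    rcases hv with hvn | hvl
    · exact hvn
    · exfalso
      rcases hvor with hvn | rfl
      · exact hvn.1 hvl.1
      · exact hvl.2 rfl
  -- key: endpoints of edges of A not inside A' lie in N(L) ∪ {u}
  have key1 : ∀ x, x ∈ A → x ∉ A' → x ∈ nbhd G L ∨ x = u := by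
    intro x hx hx'
    rcases hx with hxn | hxl
    · exact Or.inl hxn
    · by_cases hxu : x = u
      · exact Or.inr hxu
      · exact absurd (Or.inr ⟨hxl, hxu⟩ : x ∈ nbhd G L' ∪ L') hx'
  have keyedge : ∀ x y, x ∈ A → y ∈ A → G.Adj x y → ¬(x ∈ A' ∧ y ∈ A') →
      (x ∈ insert u WF ∧ y ∈ insert u WF) := by
    intro x y hx hy hadj hnot
    -- first : at least one of x, y is not in A'
    have main : ∀ a b, a ∈ A → b ∈ A → G.Adj a b → a ∉ A' →
        a ∈ insert u WF ∧ (b ∈ insert u WF ∨ b ∈ L') := by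
      intro a c ha hc hadj' ha'
      have hcpart : c ∈ insert u WF ∨ c ∈ L' := by
        rcases hc with hcn | hcl
        · exact Or.inl (Finset.mem_insert_of_mem ((hWFmem c).2 hcn))
        · by_cases hcu : c = u
          · exact Or.inl (Finset.mem_insert.2 (Or.inl hcu))
          · exact Or.inr ⟨hcl, hcu⟩
      rcases key1 a ha ha' with han | hau
      · exact ⟨Finset.mem_insert_of_mem ((hWFmem a).2 han), hcpart⟩
      · exact ⟨Finset.mem_insert.2 (Or.inl hau), hcpart⟩
    -- if b ∈ L' and a ∉ A' then a ∈ N(L') ⊆ A', contradiction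
    have noL' : ∀ a c, G.Adj a c → a ∉ A' → c ∉ L' := by
      intro a c hadj' ha' hc
      apply ha'
      have haL' : a ∉ L' := fun h => ha' (Or.inr h)
      exact Or.inl ⟨haL', c, hc, hadj'.symm⟩
    by_cases hxA' : x ∈ A'
    · have hyA' : y ∉ A' := fun h => hnot ⟨hxA', h⟩
      obtain ⟨h1, h2⟩ := main y x hy hx hadj.symm hyA'
      rcases h2 with h2 | h2
      · exact ⟨h2, h1⟩
      · exact absurd h2 (noL' y x hadj.symm hyA')
    · obtain ⟨h1, h2⟩ := main x y hx hy hadj hxA'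
      rcases h2 with h2 | h2
      · exact ⟨h1, h2⟩
      · exact absurd h2 (noL' x y hadj hxA')
  -- build the new decomposition
  set b : Fin (n + 3) → Finset V := fun i =>
    if h : i.val < n + 1 then d.b ⟨i.val, h⟩ else if i.val = n + 1 then insert u WF else WF
    with hb
  have hb_lt : ∀ (i : Fin (n+3)) (h : i.val < n + 1), b i = d.b ⟨i.val, h⟩ := by
    intro i h; rw [hb]; exact dif_pos h
  have hb_mid : ∀ (i : Fin (n+3)), i.val = n + 1 → b i = insert u WF := by
    intro i h; simp [hb, h]
  have hb_last : ∀ (i : Fin (n+3)), i.val = n + 2 → b i = WF := by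
    intro i h; simp [hb, h]
  have hsub : ∀ i, ↑(b i) ⊆ A := by
    intro i
    rcases Nat.lt_or_ge i.val (n+1) with h | h
    · rw [hb_lt i h]
      exact fun x hx => hA'A (d.sub _ hx)
    · have : i.val = n + 1 ∨ i.val = n + 2 := by omega
      rcases this with h' | h'
      · rw [hb_mid i h']
        intro x hx
        rcases Finset.mem_insert.1 hx with rfl | hx
        · exact hLA hu
        · exact hWA ((hWFmem x).1 hx)
      · rw [hb_last i h']
        exact fun x hx => hWA ((hWFmem x).1 hx)
  refine le_trans (pwEnd_le G A (nbhd G L) (n+2) ⟨b, hsub, ?_, ?_, ?_⟩ ?_) ?_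
  · -- cover
    intro v hv
    rcases hv with hvn | hvl
    · refine ⟨⟨n+2, by omega⟩, ?_⟩
      rw [hb_last _ rfl]
      exact (hWFmem v).2 hvn
    · by_cases hvu : v = u
      · refine ⟨⟨n+1, by omega⟩, ?_⟩
        rw [hb_mid _ rfl]
        exact hvu ▸ Finset.mem_insert_self _ _
      · have : v ∈ A' := Or.inr ⟨hvl, hvu⟩
        obtain ⟨i, hi⟩ := d.cover v this
        refine ⟨⟨i.val, by omega⟩, ?_⟩
        rw [hb_lt _ i.isLt]
        convert hi using 2
  · -- edges
    intro x y hx hy hadj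
    by_cases hboth : x ∈ A' ∧ y ∈ A'
    · obtain ⟨i, hxi, hyi⟩ := d.edge x y hboth.1 hboth.2 hadj
      refine ⟨⟨i.val, by omega⟩, ?_, ?_⟩ <;> rw [hb_lt _ i.isLt]
      · convert hxi using 2
      · convert hyi using 2
    · obtain ⟨h1, h2⟩ := keyedge x y hx hy hadj hboth
      refine ⟨⟨n+1, by omega⟩, ?_, ?_⟩ <;> rw [hb_mid _ rfl] <;> assumption
  · -- convexity
    intro i j k hij hjk v hvi hvk
    have hij' : i.val ≤ j.val := hij
    have hjk' : j.val ≤ k.val := hjk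
    rcases Nat.lt_or_ge j.val (n+1) with hjlt | hjge
    · -- j in the old region
      have hilt : i.val < n + 1 := by omega
      rw [hb_lt i hilt] at hvi
      rw [hb_lt j hjlt]
      rcases Nat.lt_or_ge k.val (n+1) with hklt | hkge
      · rw [hb_lt k hklt] at hvk
        exact d.conv ⟨i.val, hilt⟩ ⟨j.val, hjlt⟩ ⟨k.val, hklt⟩
          (Fin.mk_le_mk.2 hij') (Fin.mk_le_mk.2 hjk') v hvi hvk
      · -- v is in an old bag and in a new bag ⇒ v ∈ N(L') = last old bag
        have hvA' : v ∈ A' := d.sub _ hvi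
        have hvnew : v ∈ insert u WF := by
          have : k.val = n + 1 ∨ k.val = n + 2 := by omega
          rcases this with h' | h'
          · rwa [hb_mid k h'] at hvk
          · rw [hb_last k h'] at hvk
            exact Finset.mem_insert_of_mem hvk
        have hvW' : v ∈ nbhd G L' := by
          apply key3 v hvA'
          rcases Finset.mem_insert.1 hvnew with rfl | h
          · exact Or.inr rfl
          · exact Or.inl ((hWFmem v).1 h)
        have hvlast : v ∈ d.b (Fin.last n) := (hendmem v).2 hvW'
        exact d.conv ⟨i.val, hilt⟩ ⟨j.val, hjlt⟩ (Fin.last n)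
          (Fin.mk_le_mk.2 hij') (Fin.le_last _) v hvi hvlast
    · -- j in the new region
      have : j.val = n + 1 ∨ j.val = n + 2 := by omega
      rcases this with h' | h'
      · rw [hb_mid j h']
        have : k.val = n + 1 ∨ k.val = n + 2 := by omega
        rcases this with h'' | h''
        · rwa [hb_mid k h''] at hvk
        · rw [hb_last k h''] at hvk
          exact Finset.mem_insert_of_mem hvk
      · have hk : k.val = n + 2 := by omega
        rw [hb_last j h']
        rwa [hb_last k hk] at hvk
  · -- end bag
    show ↑(b (Fin.last (n+2))) = nbhd G L
    rw [hb_last _ rfl]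
    exact Set.Finite.coe_toFinset _
  · -- width bound
    rw [Nat.sub_le_iff_le_add]
    apply Finset.sup_le
    intro i _
    show (b i).card ≤ _
    rcases Nat.lt_or_ge i.val (n+1) with h | h
    · rw [hb_lt i h]
      have h1 : (d.b ⟨i.val, h⟩).card ≤ Finset.univ.sup fun i => (d.b i).card :=
        Finset.le_sup (f := fun i => (d.b i).card) (Finset.mem_univ _)
      have h2 : (Finset.univ.sup fun i => (d.b i).card) - 1 ≤
          pathwidthEnd (G.induce A') {x : ↥A' | ↑x ∈ nbhd G L'} := hwle
      have := le_max_right (nbhd G L).ncard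
        (pathwidthEnd (G.induce A') {x : ↥A' | ↑x ∈ nbhd G L'})
      omega
    · have hcard : WF.card = (nbhd G L).ncard := (Set.ncard_eq_toFinset_card _ _).symm
      have hle := le_max_left (nbhd G L).ncard
        (pathwidthEnd (G.induce A') {x : ↥A' | ↑x ∈ nbhd G L'})
      have : i.val = n + 1 ∨ i.val = n + 2 := by omega
      rcases this with h' | h'
      · rw [hb_mid i h']
        have := Finset.card_insert_le u WF
        omega
      · rw [hb_last i h']
        omega

lemma pw_lower {V : Type} [Fintype V] [DecidableEq V] (G : SimpleGraph V)
    (L : Set V) (hLne : L ≠ ∅) :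
    ∃ u ∈ L,
      (nbhd G L).ncard ≤
        pathwidthEnd (G.induce (closedNbhd G L)) {x : ↥(closedNbhd G L) | ↑x ∈ nbhd G L} ∧
      pathwidthEnd (G.induce (closedNbhd G (L \ {u})))
          {x : ↥(closedNbhd G (L \ {u})) | ↑x ∈ nbhd G (L \ {u})} ≤
        pathwidthEnd (G.induce (closedNbhd G L)) {x : ↥(closedNbhd G L) | ↑x ∈ nbhd G L} := by
  classical
  set A := closedNbhd G L with hA
  have hWA : nbhd G L ⊆ A := Set.subset_union_left
  have hLA : L ⊆ A := Set.subset_union_right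
  obtain ⟨n, d, hend, hwle⟩ := pwEnd_extract G A (nbhd G L) hWA
  have hendmem : ∀ v, v ∈ d.b (Fin.last n) ↔ v ∈ nbhd G L := by
    intro v; rw [← hend]; rfl
  set P : Finset (Fin (n+1)) := Finset.univ.filter (fun i => ∃ v ∈ L, v ∈ d.b i) with hP
  obtain ⟨u0, hu0⟩ : L.Nonempty := Set.nonempty_iff_ne_empty.2 hLne
  have hPne : P.Nonempty := by
    obtain ⟨i, hi⟩ := d.cover u0 (hLA hu0)
    exact ⟨i, by rw [hP]; exact Finset.mem_filter.2 ⟨Finset.mem_univ _, u0, hu0, hi⟩⟩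
  set j := P.max' hPne with hj
  have hPmem : ∀ i : Fin (n+1), i ∈ P ↔ ∃ v ∈ L, v ∈ d.b i := by
    intro i; rw [hP]; simp [Finset.mem_filter]
  obtain ⟨u, huL, huj⟩ : ∃ v ∈ L, v ∈ d.b j := (hPmem j).1 (P.max'_mem hPne)
  have hmax : ∀ i : Fin (n+1), ∀ v ∈ L, v ∈ d.b i → i ≤ j := fun i v hv hvi =>
    P.le_max' i ((hPmem i).2 ⟨v, hv, hvi⟩)
  have hNj : ∀ x ∈ nbhd G L, x ∈ d.b j := by
    intro x hx
    obtain ⟨hxL, v, hvL, hadj⟩ := id hx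
    obtain ⟨i, hvi, hxi⟩ := d.edge v x (hLA hvL) (hWA hx) hadj
    exact d.conv i j (Fin.last n) (hmax i v hvL hvi) (Fin.le_last j) x hxi ((hendmem x).2 hx)
  set WF : Finset V := (Set.toFinite (nbhd G L)).toFinset with hWF
  have hWFmem : ∀ x, x ∈ WF ↔ x ∈ nbhd G L := fun x => Set.Finite.mem_toFinset _
  have huWF : u ∉ WF := fun h => ((hWFmem u).1 h).1 huL
  have hins : insert u WF ⊆ d.b j := by
    intro x hx
    rcases Finset.mem_insert.1 hx with rfl | hx
    · exact huj
    · exact hNj x ((hWFmem x).1 hx)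
  have hcard1 : (nbhd G L).ncard + 1 ≤ (d.b j).card := by
    have h1 := Finset.card_le_card hins
    rw [Finset.card_insert_of_notMem huWF] at h1
    have h2 : (nbhd G L).ncard = WF.card := Set.ncard_eq_toFinset_card _ _
    omega
  have hsupj : (d.b j).card ≤ Finset.univ.sup fun i => (d.b i).card :=
    Finset.le_sup (f := fun i => (d.b i).card) (Finset.mem_univ _)
  have hncard : (nbhd G L).ncard ≤
      pathwidthEnd (G.induce A) {x : ↥A | ↑x ∈ nbhd G L} := by omega
  refine ⟨u, huL, hncard, ?_⟩
  set L' := L \ {u} with hL'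
  set A' := closedNbhd G L' with hA'
  obtain ⟨hA'A, hW'W⟩ := nbhd_closed_facts G L u huL
  have hW'A' : nbhd G L' ⊆ A' := Set.subset_union_left
  have hW'j : ∀ v ∈ nbhd G L', v ∈ d.b j := by
    intro v hv
    rcases hW'W v hv with h | rfl
    · exact hNj v h
    · exact huj
  set A'F : Finset V := (Set.toFinite A').toFinset with hA'F
  have hA'Fmem : ∀ x, x ∈ A'F ↔ x ∈ A' := fun x => Set.Finite.mem_toFinset _
  set W'F : Finset V := (Set.toFinite (nbhd G L')).toFinset with hW'F
  have hW'Fmem : ∀ x, x ∈ W'F ↔ x ∈ nbhd G L' := fun x => Set.Finite.mem_toFinset _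
  set jv := j.val with hjv
  have hjvlt : jv < n + 1 := j.isLt
  set c : Fin (jv + 2) → Finset V := fun i =>
    if h : i.val ≤ jv then d.b ⟨i.val, by omega⟩ ∩ A'F else W'F with hc
  have hc_le : ∀ (i : Fin (jv+2)) (h : i.val ≤ jv),
      c i = d.b ⟨i.val, by omega⟩ ∩ A'F := by
    intro i h; simp [hc, h]
  have hc_top : ∀ (i : Fin (jv+2)), i.val = jv + 1 → c i = W'F := by
    intro i h; simp [hc, h]
  have hsub : ∀ i, ↑(c i) ⊆ A' := by
    intro i x hx
    rcases le_or_gt i.val jv with h | h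
    · rw [hc_le i h] at hx
      exact (hA'Fmem x).1 (Finset.mem_inter.1 hx).2
    · rw [hc_top i (by omega)] at hx
      exact hW'A' ((hW'Fmem x).1 hx)
  have hwidth : ∀ i, (c i).card ≤ Finset.univ.sup fun i => (d.b i).card := by
    intro i
    rcases le_or_gt i.val jv with h | h
    · rw [hc_le i h]
      exact le_trans (Finset.card_le_card Finset.inter_subset_left)
        (Finset.le_sup (f := fun i => (d.b i).card) (Finset.mem_univ _))
    · rw [hc_top i (by omega)]
      refine le_trans (Finset.card_le_card ?_) hsupj
      intro x hx
      exact hW'j x ((hW'Fmem x).1 hx)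
  have hple := pwEnd_le G A' (nbhd G L') (jv + 1) ⟨c, hsub, ?_, ?_, ?_⟩ ?_
  · refine le_trans hple ?_
    show (Finset.univ.sup fun i => (c i).card) - 1 ≤ _
    have : (Finset.univ.sup fun i => (c i).card) ≤ Finset.univ.sup fun i => (d.b i).card :=
      Finset.sup_le fun i _ => hwidth i
    omega
  · -- cover
    intro v hv
    rcases hv with hvn | hvl
    · refine ⟨⟨jv + 1, by omega⟩, ?_⟩
      rw [hc_top _ rfl]
      exact (hW'Fmem v).2 hvn
    · obtain ⟨i0, hi0⟩ := d.cover v (hA'A (Or.inr hvl))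
      have hi0j : i0 ≤ j := hmax i0 v hvl.1 hi0
      refine ⟨⟨i0.val, by omega⟩, ?_⟩
      rw [hc_le _ (by exact hi0j : i0.val ≤ jv)]
      refine Finset.mem_inter.2 ⟨?_, (hA'Fmem v).2 (Or.inr hvl)⟩
      have : (⟨i0.val, by omega⟩ : Fin (n+1)) = i0 := Fin.ext rfl
      rw [this]
      exact hi0
  · -- edges
    intro x y hx hy hadj
    obtain ⟨i, hxi, hyi⟩ := d.edge x y (hA'A hx) (hA'A hy) hadj
    rcases le_or_gt i.val jv with h | h
    · refine ⟨⟨i.val, by omega⟩, ?_, ?_⟩ <;> rw [hc_le _ (by exact h)]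
      · refine Finset.mem_inter.2 ⟨?_, (hA'Fmem x).2 hx⟩
        have : (⟨i.val, by omega⟩ : Fin (n+1)) = i := Fin.ext rfl
        rw [this]; exact hxi
      · refine Finset.mem_inter.2 ⟨?_, (hA'Fmem y).2 hy⟩
        have : (⟨i.val, by omega⟩ : Fin (n+1)) = i := Fin.ext rfl
        rw [this]; exact hyi
    · have hji : j < i := by
        rw [Fin.lt_def]; omega
      have hxL : x ∉ L := fun hxL => absurd (hmax i x hxL hxi) (not_le.2 hji)
      have hyL : y ∉ L := fun hyL => absurd (hmax i y hyL hyi) (not_le.2 hji)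
      have hxW' : x ∈ nbhd G L' := by
        rcases hx with h' | h'
        · exact h'
        · exact absurd h'.1 hxL
      have hyW' : y ∈ nbhd G L' := by
        rcases hy with h' | h'
        · exact h'
        · exact absurd h'.1 hyL
      exact ⟨⟨jv + 1, by omega⟩, by rw [hc_top _ rfl]; exact (hW'Fmem x).2 hxW',
        by rw [hc_top _ rfl]; exact (hW'Fmem y).2 hyW'⟩
  · -- convexity
    intro i m k him hmk v hvi hvk
    have him' : i.val ≤ m.val := him
    have hmk' : m.val ≤ k.val := hmk
    rcases le_or_gt k.val jv with hk | hk
    · have hi : i.val ≤ jv := by omega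
      have hm : m.val ≤ jv := by omega
      rw [hc_le i hi] at hvi
      rw [hc_le k hk] at hvk
      rw [hc_le m hm]
      obtain ⟨hvi1, hvi2⟩ := Finset.mem_inter.1 hvi
      obtain ⟨hvk1, _⟩ := Finset.mem_inter.1 hvk
      exact Finset.mem_inter.2
        ⟨d.conv ⟨i.val, by omega⟩ ⟨m.val, by omega⟩ ⟨k.val, by omega⟩
          (Fin.mk_le_mk.2 him') (Fin.mk_le_mk.2 hmk') v hvi1 hvk1, hvi2⟩
    · have hk' : k.val = jv + 1 := by omega
      rcases le_or_gt m.val jv with hm | hm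
      · have hi : i.val ≤ jv := by omega
        rw [hc_le i hi] at hvi
        rw [hc_top k hk'] at hvk
        rw [hc_le m hm]
        obtain ⟨hvi1, hvi2⟩ := Finset.mem_inter.1 hvi
        have hvj : v ∈ d.b j := hW'j v ((hW'Fmem v).1 hvk)
        refine Finset.mem_inter.2 ⟨?_, hvi2⟩
        have hjeq : (⟨jv, by omega⟩ : Fin (n+1)) = j := Fin.ext rfl
        have := d.conv ⟨i.val, by omega⟩ ⟨m.val, by omega⟩ ⟨jv, by omega⟩
          (Fin.mk_le_mk.2 him') (Fin.mk_le_mk.2 hm) v hvi1 (by rw [hjeq]; exact hvj)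
        exact this
      · have hm' : m.val = jv + 1 := by omega
        have : m = k := Fin.ext (by omega)
        rw [this]
        exact hvk
  · -- end bag
    show ↑(c (Fin.last (jv+1))) = nbhd G L'
    rw [hc_top _ rfl]
    exact Set.Finite.coe_toFinset _

theorem pathwidthEnd_recursion {V : Type} [Fintype V] [DecidableEq V]
    (G : SimpleGraph V) (C : Set V) (hS : G.IsClique (Set.univ \ C))
    (L : Set V) (hL : L ⊆ C) (hLne : L ≠ ∅) :
    pathwidthEnd (G.induce (closedNbhd G L)) {x : ↥(closedNbhd G L) | ↑x ∈ nbhd G L} =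
      max (nbhd G L).ncard
        (sInf {m | ∃ u ∈ L,
          m = pathwidthEnd (G.induce (closedNbhd G (L \ {u})))
            {x : ↥(closedNbhd G (L \ {u})) | ↑x ∈ nbhd G (L \ {u})}}) := by
  classical
  set S := {m | ∃ u ∈ L,
      m = pathwidthEnd (G.induce (closedNbhd G (L \ {u})))
        {x : ↥(closedNbhd G (L \ {u})) | ↑x ∈ nbhd G (L \ {u})}} with hSdef
  obtain ⟨u0, hu0⟩ : L.Nonempty := Set.nonempty_iff_ne_empty.2 hLne
  have hSne : S.Nonempty := ⟨_, u0, hu0, rfl⟩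
  apply le_antisymm
  · obtain ⟨u, huL, hEq⟩ := Nat.sInf_mem hSne
    have := pw_upper G L u huL
    rw [← hEq] at this
    exact this
  · obtain ⟨u, huL, h1, h2⟩ := pw_lower G L hLne
    exact max_le h1 (le_trans (Nat.sInf_le ⟨u, huL, rfl⟩) h2)
end
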